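/- For the erasure-channel example: let P_{XY}(x,y) = (1−α)/2 if x=y and α/2 if x≠y for binary X,Y, and let Z = (X,Y) with probability γ and Z = erasure symbol with probability 1−γ (independently). Then Sim_Y(Z→X) holds if and only if γ ≥ 1 − 2α. -/

import Mathlib

open Matrix

/-- Joint PMF of binary `X, Y`: `P_{XY}(x,y) = (1-α)/2` if `x = y`, `α/2` otherwise. -/
noncomputable def PXY (α : ℝ) (x y : Fin 2) : ℝ := if x = y then (1 - α) / 2 else α / 2

/-- Joint PMF of `Y` and `Z`, where `Z = (X,Y)` with probability `γ` and
`Z = φ` (the erasure symbol, `Sum.inr ()`) with probability `1 - γ`. -/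
noncomputable def PYZ (α γ : ℝ) (y : Fin 2) (z : (Fin 2 × Fin 2) ⊕ Unit) : ℝ :=
  match z with
  | Sum.inl (x', y') => if y' = y then γ * PXY α x' y' else 0
  | Sum.inr _ => (1 - γ) * (1 / 2)

/-- For the erasure-channel example, `Sim_Y(Z → X)` holds
(there is a conditional PMF `Pbar = P_{X̄|Z}` with
`∑ z, P_{YZ}(y,z)·Pbar(x|z) = P_{YX}(y,x)` for all `x, y`) iff `γ ≥ 1 − 2α`. -/
theorem stmt19 (α γ : ℝ) (hα0 : 0 ≤ α) (hα : α ≤ 1 / 2) (hγ0 : 0 ≤ γ) (hγ1 : γ ≤ 1) :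
    (∃ Pbar : (Fin 2 × Fin 2) ⊕ Unit → Fin 2 → ℝ,
      (∀ z x, 0 ≤ Pbar z x) ∧ (∀ z, ∑ x, Pbar z x = 1) ∧
      (∀ y x : Fin 2, ∑ z, PYZ α γ y z * Pbar z x = PXY α x y)) ↔
    1 - 2 * α ≤ γ := by
  constructor
  · rintro ⟨P, hpos, hsum, heq⟩
    have h1 := heq 0 1
    have h2 := heq 1 0
    have hs := hsum (Sum.inr ())
    simp [PYZ, PXY, Fintype.sum_sum_type, Fintype.sum_prod_type, Fin.sum_univ_two] at h1 h2 hs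
    have hα2 : (0:ℝ) ≤ (1 - α) / 2 := by linarith
    have hα3 : (0:ℝ) ≤ α / 2 := by linarith
    have q1 : 0 ≤ γ * ((1 - α) / 2) * P (Sum.inl (0, 0)) 1 :=
      mul_nonneg (mul_nonneg hγ0 hα2) (hpos _ _)
    have q2 : 0 ≤ γ * (α / 2) * P (Sum.inl (1, 0)) 1 :=
      mul_nonneg (mul_nonneg hγ0 hα3) (hpos _ _)
    have q3 : 0 ≤ γ * (α / 2) * P (Sum.inl (0, 1)) 0 :=
      mul_nonneg (mul_nonneg hγ0 hα3) (hpos _ _)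
    have q4 : 0 ≤ γ * ((1 - α) / 2) * P (Sum.inl (1, 1)) 0 :=
      mul_nonneg (mul_nonneg hγ0 hα2) (hpos _ _)
    have hkey : (1 - γ) * (P (Sum.inr ()) 0 + P (Sum.inr ()) 1) = 1 - γ := by
      rw [hs, mul_one]
    nlinarith [hkey]
  · intro h
    set t : ℝ := ((1+γ)/2 - α)/γ with ht
    set s : ℝ := (γ-(1-2*α))/(2*γ) with hs
    have ht01 : 0 ≤ t ∧ t ≤ 1 := by
      rcases eq_or_lt_of_le hγ0 with hγ | hγ
      · constructor <;> simp [ht, ← hγ]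
      · constructor
        · apply div_nonneg _ hγ.le; linarith
        · rw [div_le_one hγ]; linarith
    have hs01 : 0 ≤ s ∧ s ≤ 1 := by
      rcases eq_or_lt_of_le hγ0 with hγ | hγ
      · constructor <;> simp [hs, ← hγ]
      · constructor
        · apply div_nonneg _ (by linarith); linarith
        · rw [div_le_one (by linarith)]; linarith
    refine ⟨fun z x => match z with
      | Sum.inl (x', y') => if y' = 0 then (if x = 0 then t else 1 - t)
          else (if x = 0 then s else 1 - s)
      | Sum.inr _ => 1/2, ?_, ?_, ?_⟩
    · rintro (⟨x', y'⟩ | u) x <;> dsimp only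
      · split_ifs <;> linarith [ht01.1, ht01.2, hs01.1, hs01.2]
      · norm_num
    · rintro (⟨x', y'⟩ | u) <;> simp [Fin.sum_univ_two] <;>
        (try split_ifs) <;> (try ring)
    · intro y x
      rcases eq_or_lt_of_le hγ0 with hγ | hγ
      · have hα' : α = 1/2 := le_antisymm hα (by linarith)
        fin_cases y <;> fin_cases x <;>
          simp [PYZ, PXY, Fintype.sum_sum_type, Fintype.sum_prod_type, Fin.sum_univ_two,
            ← hγ, hα'] <;> try norm_num
      · have hγ' : γ ≠ 0 := ne_of_gt hγ
        fin_cases y <;> fin_cases x <;>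
          simp [PYZ, PXY, Fintype.sum_sum_type, Fintype.sum_prod_type, Fin.sum_univ_two,
            ht, hs] <;> (try field_simp) <;> (try ring)
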